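/- The HOC function φ with φ(x) = ((γ² + λ²)/2)·ln(1 + x²/γ²) + δ for |x| > λ and φ(x) = x²/2 for |x| ≤ λ, with δ = λ²/2 − ((γ² + λ²)/2)·ln(1 + λ²/γ²), is continuously differentiable on ℝ, with φ'(x) = (γ² + λ²)x/(γ² + x²) for |x| > λ. -/

import Mathlib

theorem hoc_contDiff (lam gam : ℝ) (hlam : 0 < lam) (hgam : 0 < gam) :
    ContDiff ℝ 1 (fun x : ℝ =>
      if |x| ≤ lam then x^2/2
      else ((gam^2 + lam^2)/2) * Real.log (1 + x^2/gam^2)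
        + (lam^2/2 - ((gam^2 + lam^2)/2) * Real.log (1 + lam^2/gam^2))) ∧
    ∀ x : ℝ, lam < |x| →
      deriv (fun x : ℝ =>
        if |x| ≤ lam then x^2/2
        else ((gam^2 + lam^2)/2) * Real.log (1 + x^2/gam^2)
          + (lam^2/2 - ((gam^2 + lam^2)/2) * Real.log (1 + lam^2/gam^2))) x
      = (gam^2 + lam^2) * x / (gam^2 + x^2) := by
  set c : ℝ := (gam^2 + lam^2)/2 with hc
  set δ : ℝ := lam^2/2 - c * Real.log (1 + lam^2/gam^2) with hδ
  set F : ℝ → ℝ := fun x => c * Real.log (1 + x^2/gam^2) + δ with hFdef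
  set f : ℝ → ℝ := fun x => if |x| ≤ lam then x^2/2 else F x with hfdef
  set g : ℝ → ℝ := fun x => if |x| ≤ lam then x else (gam^2 + lam^2) * x / (gam^2 + x^2)
    with hgdef
  have hgam2 : (0:ℝ) < gam^2 := by positivity
  have hpos : ∀ x : ℝ, (0:ℝ) < 1 + x^2/gam^2 := fun x => by positivity
  have hden : ∀ x : ℝ, (0:ℝ) < gam^2 + x^2 := fun x => by positivity
  have hsum : gam^2 + lam^2 ≠ 0 := (hden lam).ne'
  have hcancel : ∀ t : ℝ, (gam^2 + lam^2) * t / (gam^2 + lam^2) = t := fun t => by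
    rw [mul_comm, mul_div_assoc, div_self hsum, mul_one]
  -- derivative of F
  have hF : ∀ x : ℝ, HasDerivAt F ((gam^2 + lam^2) * x / (gam^2 + x^2)) x := by
    intro x
    have hu : HasDerivAt (fun y : ℝ => 1 + y^2/gam^2) (2*x/gam^2) x := by
      simpa using ((hasDerivAt_pow 2 x).div_const (gam^2)).const_add 1
    have hlog := hu.log (hpos x).ne'
    have := (hlog.const_mul c).add_const δ
    refine this.congr_deriv ?_
    rw [hc]
    field_simp
  -- F at the boundary
  have hFlam : F lam = lam^2/2 := by simp [hFdef, hδ]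
  have hFneg : F (-lam) = lam^2/2 := by
    have h2 : (-lam)^2 = lam^2 := by ring
    simp only [hFdef, hδ, h2]
    ring
  have habs_lam : |lam| ≤ lam := by rw [abs_of_pos hlam]
  have habs_neg : |(-lam)| ≤ lam := by rw [abs_neg, abs_of_pos hlam]
  have hf_lam : f lam = lam^2/2 := by
    show (if |lam| ≤ lam then lam^2/2 else F lam) = lam^2/2
    rw [if_pos habs_lam]
  have hf_neg : f (-lam) = (-lam)^2/2 := by
    show (if |(-lam)| ≤ lam then (-lam)^2/2 else F (-lam)) = (-lam)^2/2
    rw [if_pos habs_neg]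
  -- square function derivative
  have hsq : ∀ x : ℝ, HasDerivAt (fun y : ℝ => y^2/2) x x := by
    intro x
    have := (hasDerivAt_pow 2 x).div_const 2
    simpa using this
  -- f has derivative g everywhere
  have hd : ∀ x : ℝ, HasDerivAt f (g x) x := by
    intro x
    rcases lt_trichotomy |x| lam with h | h | h
    · -- interior of the quadratic region
      have hmem : {y : ℝ | |y| < lam} ∈ nhds x :=
        (isOpen_lt continuous_abs continuous_const).mem_nhds h
      have heq : f =ᶠ[nhds x] fun y => y^2/2 :=
        Filter.eventuallyEq_of_mem hmem (fun y hy => by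
          have hy' : |y| < lam := hy
          show (if |y| ≤ lam then y^2/2 else F y) = y^2/2
          rw [if_pos hy'.le])
      have hgx : g x = x := by
        show (if |x| ≤ lam then x else _) = x
        rw [if_pos h.le]
      rw [hgx]
      exact (hsq x).congr_of_eventuallyEq heq
    · -- boundary
      have hgx : g x = x := by
        show (if |x| ≤ lam then x else _) = x
        rw [if_pos h.le]
      rw [hgx]
      obtain hx | hx := (abs_eq hlam.le).mp h
      · -- x = lam
        subst hx
        have hleft : HasDerivWithinAt f x (Set.Iic x) x := by
          have heq : f =ᶠ[nhdsWithin x (Set.Iic x)] fun y => y^2/2 := by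
            have hmem : Set.Ioi (-x) ∈ nhdsWithin x (Set.Iic x) :=
              nhdsWithin_le_nhds (isOpen_Ioi.mem_nhds (by simp only [Set.mem_Ioi]; linarith))
            filter_upwards [hmem, self_mem_nhdsWithin] with y h1 h2
            have hy : |y| ≤ x := abs_le.mpr ⟨le_of_lt h1, h2⟩
            show (if |y| ≤ x then y^2/2 else F y) = y^2/2
            rw [if_pos hy]
          exact ((hsq x).hasDerivWithinAt).congr_of_eventuallyEq heq hf_lam
        have hright : HasDerivWithinAt f x (Set.Ici x) x := by
          have hF' : HasDerivWithinAt F x (Set.Ici x) x := by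
            have h0 := (hF x).hasDerivWithinAt (s := Set.Ici x)
            rwa [hcancel x] at h0
          refine hF'.congr (fun y hy => ?_) (by rw [hf_lam, hFlam])
          rcases eq_or_lt_of_le (Set.mem_Ici.mp hy) with rfl | hy'
          · rw [hf_lam, hFlam]
          · have hny : ¬ |y| ≤ x := by
              rw [abs_of_pos (lt_trans hlam hy')]; linarith
            show (if |y| ≤ x then y^2/2 else F y) = F y
            rw [if_neg hny]
        have hu := hleft.union hright
        rw [Set.Iic_union_Ici] at hu
        exact hasDerivWithinAt_univ.mp hu
      · -- x = -lam
        subst hx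
        have hleft : HasDerivWithinAt f (-lam) (Set.Iic (-lam)) (-lam) := by
          have hF' : HasDerivWithinAt F (-lam) (Set.Iic (-lam)) (-lam) := by
            have h0 := (hF (-lam)).hasDerivWithinAt (s := Set.Iic (-lam))
            have h2 : (-lam)^2 = lam^2 := by ring
            rw [h2, hcancel (-lam)] at h0
            exact h0
          refine hF'.congr (fun y hy => ?_) (by rw [hf_neg, hFneg]; ring)
          rcases eq_or_lt_of_le (Set.mem_Iic.mp hy) with rfl | hy'
          · rw [hf_neg, hFneg]; ring
          · have hny : ¬ |y| ≤ lam := by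
              rw [abs_of_neg (by linarith : y < 0)]; linarith
            show (if |y| ≤ lam then y^2/2 else F y) = F y
            rw [if_neg hny]
        have hright : HasDerivWithinAt f (-lam) (Set.Ici (-lam)) (-lam) := by
          have heq : f =ᶠ[nhdsWithin (-lam) (Set.Ici (-lam))] fun y => y^2/2 := by
            have hmem : Set.Iio lam ∈ nhdsWithin (-lam) (Set.Ici (-lam)) :=
              nhdsWithin_le_nhds (isOpen_Iio.mem_nhds (by simp only [Set.mem_Iio]; linarith))
            filter_upwards [hmem, self_mem_nhdsWithin] with y h1 h2
            have hy : |y| ≤ lam := abs_le.mpr ⟨h2, le_of_lt h1⟩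
            show (if |y| ≤ lam then y^2/2 else F y) = y^2/2
            rw [if_pos hy]
          exact ((hsq (-lam)).hasDerivWithinAt).congr_of_eventuallyEq heq hf_neg
        have hu := hleft.union hright
        rw [Set.Iic_union_Ici] at hu
        exact hasDerivWithinAt_univ.mp hu
    · -- outer region
      have hmem : {y : ℝ | lam < |y|} ∈ nhds x :=
        (isOpen_lt continuous_const continuous_abs).mem_nhds h
      have heq : f =ᶠ[nhds x] F :=
        Filter.eventuallyEq_of_mem hmem (fun y hy => by
          have hy' : lam < |y| := hy
          show (if |y| ≤ lam then y^2/2 else F y) = F y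
          rw [if_neg (not_le.mpr hy')])
      have hgx : g x = (gam^2 + lam^2) * x / (gam^2 + x^2) := by
        show (if |x| ≤ lam then x else _) = _
        rw [if_neg (not_le.mpr h)]
      rw [hgx]
      exact (hF x).congr_of_eventuallyEq heq
  -- continuity of g
  have hgc : Continuous g := by
    apply Continuous.if_le
    · exact continuous_id
    · exact (continuous_const.mul continuous_id).div
        (continuous_const.add (continuous_pow 2)) (fun x => (hden x).ne')
    · exact continuous_abs
    · exact continuous_const
    · intro x hx
      have hx2 : x^2 = lam^2 := by rw [← sq_abs, hx]
      rw [hx2, hcancel x]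
  have hderiv : deriv f = g := funext fun x => (hd x).deriv
  constructor
  · rw [contDiff_one_iff_deriv]
    exact ⟨fun x => (hd x).differentiableAt, hderiv ▸ hgc⟩
  · intro x hx
    rw [hderiv]
    show (if |x| ≤ lam then x else (gam^2 + lam^2) * x / (gam^2 + x^2)) = _
    rw [if_neg (not_le.mpr hx)]
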